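/- Let L be a 3-dimensional left Leibniz algebra over a field F which is not a Lie algebra (there exists a ∈ L with [a,a] ≠ 0), is nilpotent of nilpotency class 2 ([x,[y,z]] = 0 for all x,y,z ∈ L, but [L,L] ≠ 0), and whose center ζ(L) = {x : [x,y] = 0 = [y,x] for all y ∈ L} has dimension 2. Then L has a basis a₁, a₂, a₃ such that [a₁,a₁] = a₃ and all other brackets of basis vectors are zero ([a₁,a₂] = [a₁,a₃] = [a₂,a₁] = [a₂,a₂] = [a₂,a₃] = [a₃,a₁] = [a₃,a₂] = [a₃,a₃] = 0); that is, L is isomorphic to Lei₂(3,F). -/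

import Mathlib

/-- The center `ζ(L) = {x ∈ L : [x,y] = 0 = [y,x] for all y}` of a Leibniz algebra
with bracket `br`, as a submodule. -/
def leibCenter (F L : Type*) [Field F] [AddCommGroup L] [Module F L]
    (br : L →ₗ[F] L →ₗ[F] L) : Submodule F L where
  carrier := {x : L | ∀ y, br x y = 0 ∧ br y x = 0}
  zero_mem' := by
    intro y
    simp
  add_mem' := by
    intro a b ha hb y
    refine ⟨?_, ?_⟩
    · have h1 := (ha y).1
      have h2 := (hb y).1
      simp [map_add, h1, h2]
    · have h1 := (ha y).2
      have h2 := (hb y).2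
      simp [map_add, h1, h2]
  smul_mem' := by
    intro c a ha y
    refine ⟨?_, ?_⟩
    · have h1 := (ha y).1
      simp [map_smul, h1]
    · have h1 := (ha y).2
      simp [map_smul, h1]

/-- a 3-dimensional left Leibniz algebra `L` that is not a Lie
algebra, is nilpotent of class 2, and has 2-dimensional center possesses a basis
`a₁, a₂, a₃` with `[a₁,a₁] = a₃` and all other brackets of basis vectors zero;
i.e. `L ≅ Lei₂(3,F)`. -/
theorem class_two_center_two {F L : Type*} [Field F] [AddCommGroup L] [Module F L]
    (br : L →ₗ[F] L →ₗ[F] L)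
    (hleib : ∀ a b c : L, br (br a b) c = br a (br b c) - br b (br a c))
    (hdim : Module.finrank F L = 3)
    (hnotlie : ∃ a : L, br a a ≠ 0)
    (hnil : ∀ x y z : L, br x (br y z) = 0)
    (hder : ∃ x y : L, br x y ≠ 0)
    (hcen : Module.finrank F (leibCenter F L br) = 2) :
    ∃ b : Module.Basis (Fin 3) F L, br (b 0) (b 0) = b 2 ∧
      ∀ i j : Fin 3, ¬(i = 0 ∧ j = 0) → br (b i) (b j) = 0 := by

  have hfd : FiniteDimensional F L := Module.finite_of_finrank_eq_succ hdim
  obtain ⟨a, ha⟩ := hnotlie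
  set c := br a a with hc
  have hcmem : c ∈ leibCenter F L br := by
    intro y
    refine ⟨?_, hnil y a a⟩
    rw [hc, hleib]
    simp
  have hcne : c ≠ 0 := ha
  -- find z in the center not in the span of c
  have hz : ∃ z ∈ leibCenter F L br, z ∉ Submodule.span F {c} := by
    by_contra h
    push_neg at h
    have hle : leibCenter F L br ≤ Submodule.span F {c} := fun z hz => h z hz
    have h1 : Module.finrank F (Submodule.span F {c}) = 1 :=
      finrank_span_singleton hcne
    have h2 := Submodule.finrank_mono hle
    rw [hcen, h1] at h2
    omega
  obtain ⟨z, hzmem, hzspan⟩ := hz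
  -- linear independence of ![a, z, c]
  have hindc : LinearIndependent F ![c] := by
    rw [linearIndependent_unique_iff]
    simpa using hcne
  have hrange1 : Set.range ![c] = {c} := by
    simp [Matrix.range_cons, Matrix.range_empty, Set.pair_comm]
  have hindzc : LinearIndependent F ![z, c] := by
    rw [show (![z, c] : Fin 2 → L) = Fin.cons z ![c] from rfl,
      linearIndependent_fin_cons]
    exact ⟨hindc, by rwa [hrange1]⟩
  have hanotcen : a ∉ leibCenter F L br := by
    intro hmem
    exact ha ((hmem a).1)
  have hrange2 : Set.range ![z, c] = {z, c} := by
    simp [Matrix.range_cons, Matrix.range_empty, Set.pair_comm]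
  have hspanle : Submodule.span F (Set.range ![z, c]) ≤ leibCenter F L br := by
    rw [hrange2, Submodule.span_le]
    intro x hx
    rcases hx with h | h
    · subst h; exact hzmem
    · simp only [Set.mem_singleton_iff] at h; subst h; exact hcmem
  have hind : LinearIndependent F ![a, z, c] := by
    rw [show (![a, z, c] : Fin 3 → L) = Fin.cons a ![z, c] from rfl,
      linearIndependent_fin_cons]
    exact ⟨hindzc, fun hmem => hanotcen (hspanle hmem)⟩
  have hcard : Fintype.card (Fin 3) = Module.finrank F L := by simp [hdim]
  let b := basisOfLinearIndependentOfCardEqFinrank hind hcard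
  have hb : ∀ i, b i = ![a, z, c] i := fun i => by
    simp [b, coe_basisOfLinearIndependentOfCardEqFinrank]
  refine ⟨b, ?_, ?_⟩
  · rw [hb 0, hb 2]
    simp [hc]
  · intro i j hij
    fin_cases i <;> fin_cases j <;> simp_all <;>
      first
        | exact (hzmem _).1
        | exact (hzmem _).2
        | exact (hcmem _).1
        | exact (hcmem _).2
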